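/- Let βγ > 1, β ≤ γ, and λ_c = (γ/β)^(√(βγ)/(√(βγ)−1)). Then for every x with 0 < x ≤ λ_c, (βγ − 1)·x·log(λ_c/x) ≤ (βx + 1)(x + γ)·log((x + γ)/(βx + 1)). -/

import Mathlib

open Real Set

private lemma hdla {s t : ℝ} (h : 0 < s * t + 1) :
    HasDerivAt (fun u : ℝ => Real.log (s * u + 1)) (s / (s * t + 1)) t := by
  have h1 : HasDerivAt (fun u : ℝ => s * u + 1) s t := by
    simpa using ((hasDerivAt_id t).const_mul s).add_const 1
  exact h1.log (ne_of_gt h)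

private lemma hdlb {s t : ℝ} (h : 0 < t + s) :
    HasDerivAt (fun u : ℝ => Real.log (u + s)) (1 / (t + s)) t := by
  have h1 : HasDerivAt (fun u : ℝ => u + s) 1 t := (hasDerivAt_id t).add_const s
  exact h1.log (ne_of_gt h)

private lemma logK {s : ℝ} (hs : 1 ≤ s) {y : ℝ} (hy : 1 ≤ y) :
    (s + 1) * (Real.log (s * y + 1) - Real.log (y + s)) ≤ (s - 1) * Real.log y := by
  have hs0 : (0:ℝ) < s := by linarith
  have hd : ∀ t ∈ Ioi (1:ℝ), HasDerivAt
      (fun t => (s - 1) * Real.log t - (s + 1) * (Real.log (s * t + 1) - Real.log (t + s)))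
      ((s - 1) * t⁻¹ - (s + 1) * (s / (s * t + 1) - 1 / (t + s))) t := by
    intro t ht
    have ht0 : (0:ℝ) < t := lt_trans one_pos ht
    exact ((Real.hasDerivAt_log (ne_of_gt ht0)).const_mul (s - 1)).sub
      (((hdla (by positivity)).sub (hdlb (by positivity))).const_mul (s + 1))
  have hmono : MonotoneOn
      (fun t => (s - 1) * Real.log t - (s + 1) * (Real.log (s * t + 1) - Real.log (t + s)))
      (Ici 1) := by
    apply monotoneOn_of_deriv_nonneg (convex_Ici 1)
    · apply ContinuousOn.sub
      · exact continuousOn_const.mul (ContinuousOn.log continuousOn_id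
          (fun t ht => ne_of_gt (lt_of_lt_of_le one_pos ht)))
      · apply continuousOn_const.mul
        apply ContinuousOn.sub
        · exact ContinuousOn.log (by fun_prop)
            (fun t ht => by have : (1:ℝ) ≤ t := ht; nlinarith)
        · exact ContinuousOn.log (by fun_prop)
            (fun t ht => by have : (1:ℝ) ≤ t := ht; nlinarith)
    · rw [interior_Ici]
      intro t ht
      exact ((hd t ht).differentiableAt).differentiableWithinAt
    · rw [interior_Ici]
      intro t ht
      rw [(hd t ht).deriv]
      have ht1 : (1:ℝ) < t := ht
      have key : (s - 1) * t⁻¹ - (s + 1) * (s / (s * t + 1) - 1 / (t + s))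
          = (s - 1) * s * (t - 1) ^ 2 / (t * ((s * t + 1) * (t + s))) := by
        field_simp
        ring
      rw [key]
      apply div_nonneg
      · have : (0:ℝ) ≤ s - 1 := by linarith
        positivity
      · positivity
  have h1 := hmono (show (1:ℝ) ∈ Ici 1 from self_mem_Ici) (mem_Ici.2 hy) hy
  simp only [mul_one, Real.log_one, add_comm 1 s] at h1
  linarith

private lemma logH1 {s : ℝ} (hs : 1 ≤ s) {y : ℝ} (hy0 : 0 < y) (hy1 : y ≤ 1) :
    0 ≤ (s * y + 1) * (y + s) * (Real.log (y + s) - Real.log (s * y + 1))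
      + (s ^ 2 - 1) * (y * Real.log y) := by
  have hs0 : (0:ℝ) < s := by linarith
  -- the auxiliary function G (derivative of main function F)
  set G : ℝ → ℝ := fun t => (2 * s * t + (s ^ 2 + 1)) * (Real.log (t + s) - Real.log (s * t + 1))
      + (s ^ 2 - 1) * Real.log t with hG_def
  have hdG : ∀ t ∈ Ioo (0:ℝ) 1, HasDerivAt G
      (2 * s * (Real.log (t + s) - Real.log (s * t + 1))
        + (2 * s * t + (s ^ 2 + 1)) * (1 / (t + s) - s / (s * t + 1))
        + (s ^ 2 - 1) * t⁻¹) t := by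
    intro t ht
    have ht0 : (0:ℝ) < t := ht.1
    have hlin : HasDerivAt (fun t : ℝ => 2 * s * t + (s ^ 2 + 1)) (2 * s) t := by
      simpa using ((hasDerivAt_id t).const_mul (2 * s)).add_const (s ^ 2 + 1)
    exact (hlin.mul ((hdlb (by positivity)).sub (hdla (by positivity)))).add
      ((Real.hasDerivAt_log (ne_of_gt ht0)).const_mul (s ^ 2 - 1))
  have hGmono : MonotoneOn G (Ioc 0 1) := by
    apply monotoneOn_of_deriv_nonneg (convex_Ioc 0 1)
    · apply ContinuousOn.add
      · apply ContinuousOn.mul (by fun_prop)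
        apply ContinuousOn.sub
        · exact ContinuousOn.log (by fun_prop)
            (fun t ht => by have := ht.1; nlinarith)
        · exact ContinuousOn.log (by fun_prop)
            (fun t ht => by have := ht.1; nlinarith)
      · exact continuousOn_const.mul (ContinuousOn.log continuousOn_id
          (fun t ht => ne_of_gt ht.1))
    · rw [interior_Ioc]
      intro t ht
      exact ((hdG t ht).differentiableAt).differentiableWithinAt
    · rw [interior_Ioc]
      intro t ht
      rw [(hdG t ht).deriv]
      obtain ⟨ht0, ht1⟩ := ht
      have p1 : 0 ≤ 2 * s * (Real.log (t + s) - Real.log (s * t + 1)) := by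
        have hle : s * t + 1 ≤ t + s := by nlinarith
        have := Real.log_le_log (by positivity) hle
        nlinarith
      have p2 : (2 * s * t + (s ^ 2 + 1)) * (1 / (t + s) - s / (s * t + 1))
          + (s ^ 2 - 1) * t⁻¹
          = s * (s ^ 2 - 1) * (1 - t ^ 2) / (t * ((s * t + 1) * (t + s))) := by
        field_simp
        ring
      have p3 : 0 ≤ s * (s ^ 2 - 1) * (1 - t ^ 2) / (t * ((s * t + 1) * (t + s))) := by
        apply div_nonneg
        · have h1 : (0:ℝ) ≤ s ^ 2 - 1 := by nlinarith
          have h2 : (0:ℝ) ≤ 1 - t ^ 2 := by nlinarith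
          positivity
        · positivity
      linarith [p2 ▸ p3]
  have hG1 : G 1 = 0 := by
    simp only [hG_def, mul_one, Real.log_one, add_comm 1 s, sub_self, mul_zero, add_zero]
  have hGle : ∀ t ∈ Ioc (0:ℝ) 1, G t ≤ 0 := by
    intro t ht
    have := hGmono ht (show (1:ℝ) ∈ Ioc 0 1 from ⟨one_pos, le_refl 1⟩) ht.2
    rw [hG1] at this
    exact this
  -- the main function F
  set F : ℝ → ℝ := fun t => (s * t + 1) * (t + s) * (Real.log (t + s) - Real.log (s * t + 1))
      + (s ^ 2 - 1) * (t * Real.log t) with hF_def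
  have hdF : ∀ t ∈ Ioo (0:ℝ) 1, HasDerivAt F (G t) t := by
    intro t ht
    have ht0 : (0:ℝ) < t := ht.1
    have hlin1 : HasDerivAt (fun t : ℝ => s * t + 1) s t := by
      simpa using ((hasDerivAt_id t).const_mul s).add_const 1
    have hlin2 : HasDerivAt (fun t : ℝ => t + s) 1 t := (hasDerivAt_id t).add_const s
    have hq := hlin1.mul hlin2
    have hmain := (hq.mul ((hdlb (show (0:ℝ) < t + s by positivity)).sub
        (hdla (show (0:ℝ) < s * t + 1 by positivity)))).add
      ((Real.hasDerivAt_mul_log (ne_of_gt ht0)).const_mul (s ^ 2 - 1))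
    refine hmain.congr_deriv ?_
    rw [hG_def]
    simp only [Pi.mul_apply, Pi.sub_apply]
    have h1 : t + s ≠ 0 := by positivity
    have h2 : s * t + 1 ≠ 0 := by positivity
    field_simp
    ring
  have hFanti : AntitoneOn F (Ioc 0 1) := by
    apply antitoneOn_of_deriv_nonpos (convex_Ioc 0 1)
    · apply ContinuousOn.add
      · apply ContinuousOn.mul (by fun_prop)
        apply ContinuousOn.sub
        · exact ContinuousOn.log (by fun_prop)
            (fun t ht => by have := ht.1; nlinarith)
        · exact ContinuousOn.log (by fun_prop)
            (fun t ht => by have := ht.1; nlinarith)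
      · apply continuousOn_const.mul
        exact continuousOn_id.mul (ContinuousOn.log continuousOn_id
          (fun t ht => ne_of_gt ht.1))
    · rw [interior_Ioc]
      intro t ht
      exact ((hdF t ht).differentiableAt).differentiableWithinAt
    · rw [interior_Ioc]
      intro t ht
      rw [(hdF t ht).deriv]
      exact hGle t ⟨ht.1, le_of_lt ht.2⟩
  have hF1 : F 1 = 0 := by
    simp only [hF_def, mul_one, one_mul, Real.log_one, add_comm 1 s, sub_self, mul_zero, add_zero]
  have := hFanti (show y ∈ Ioc 0 1 from ⟨hy0, hy1⟩) (show (1:ℝ) ∈ Ioc 0 1 from ⟨one_pos, le_refl 1⟩) hy1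
  rw [hF1] at this
  exact this

theorem stmt_4 (β γ x : ℝ) (hβ : 0 < β) (hγ : 0 < γ) (h1 : 1 < β * γ) (hle : β ≤ γ)
    (hx : 0 < x)
    (hxc : x ≤ (γ / β) ^ (Real.sqrt (β * γ) / (Real.sqrt (β * γ) - 1))) :
    (β * γ - 1) * x *
        Real.log ((γ / β) ^ (Real.sqrt (β * γ) / (Real.sqrt (β * γ) - 1)) / x) ≤
      (β * x + 1) * (x + γ) * Real.log ((x + γ) / (β * x + 1)) := by
  have hβγ : 0 < β * γ := by positivity
  obtain ⟨s, hs_def⟩ : ∃ a, Real.sqrt (β * γ) = a := ⟨_, rfl⟩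
  rw [hs_def] at hxc ⊢
  obtain ⟨lam, hlam_def⟩ : ∃ a, (γ / β) ^ (s / (s - 1)) = a := ⟨_, rfl⟩
  rw [hlam_def] at hxc ⊢
  obtain ⟨xs, hxs_def⟩ : ∃ a, Real.sqrt (γ / β) = a := ⟨_, rfl⟩
  have hs1 : 1 < s := by
    rw [← hs_def]
    exact (Real.lt_sqrt zero_le_one).2 (by rw [one_pow]; exact h1)
  have hsq : s ^ 2 = β * γ := by rw [← hs_def]; exact Real.sq_sqrt hβγ.le
  have hxs0 : 0 < xs := by rw [← hxs_def]; exact Real.sqrt_pos.2 (by positivity)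
  have hxs1 : 1 ≤ xs := by
    rw [← hxs_def]
    exact Real.one_le_sqrt.2 ((one_le_div hβ).2 hle)
  have hbxs : β * xs = s := by
    rw [← hxs_def, ← hs_def]
    have h2 : β * Real.sqrt (γ / β) = Real.sqrt (β ^ 2) * Real.sqrt (γ / β) := by
      rw [Real.sqrt_sq hβ.le]
    rw [h2, ← Real.sqrt_mul (by positivity)]
    congr 1
    field_simp
  have hgxs : xs * s = γ := by
    rw [← hxs_def, ← hs_def, ← Real.sqrt_mul (by positivity)]
    rw [show γ / β * (β * γ) = γ ^ 2 by field_simp]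
    exact Real.sqrt_sq hγ.le
  have hl0 : 0 ≤ Real.log xs := Real.log_nonneg hxs1
  have hlam0 : 0 < lam := by
    rw [← hlam_def]
    exact Real.rpow_pos_of_pos (by positivity) _
  have hloglam : (s - 1) * Real.log lam = 2 * s * Real.log xs := by
    rw [← hlam_def, Real.log_rpow (by positivity)]
    have h2 : Real.log (γ / β) = 2 * Real.log xs := by
      rw [← hxs_def, Real.log_sqrt (by positivity)]
      ring
    rw [h2]
    have hs1' : s - 1 ≠ 0 := sub_ne_zero.mpr hs1.ne'
    field_simp
  have hxγ : 0 < x + γ := by positivity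
  have hβx1 : 0 < β * x + 1 := by positivity
  rw [Real.log_div (ne_of_gt hlam0) (ne_of_gt hx), Real.log_div (ne_of_gt hxγ) (ne_of_gt hβx1),
    ← hsq]
  have hid : (β * x + 1) * (x + γ) = (s + 1) ^ 2 * x + β * (x - xs) ^ 2 := by
    linear_combination (-x) * hsq + (2 * x - xs) * hbxs + (-1) * hgxs
  have hPx : (s + 1) ^ 2 * x ≤ (β * x + 1) * (x + γ) := by
    nlinarith [mul_nonneg hβ.le (sq_nonneg (x - xs))]
  have hPpos : 0 < (β * x + 1) * (x + γ) := by positivity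
  have hloglam2 : (s ^ 2 - 1) * x * Real.log lam = 2 * s * (s + 1) * x * Real.log xs := by
    linear_combination (s + 1) * x * hloglam
  have e1 : s * (x / xs) + 1 = β * x + 1 := by
    rw [← hbxs]
    field_simp
  have e2 : x / xs + s = (x + γ) / xs := by
    rw [← hgxs]
    field_simp
  have e4 : Real.log (x / xs) = Real.log x - Real.log xs := Real.log_div hx.ne' hxs0.ne'
  rcases le_total x xs with hcase | hcase
  · -- x ≤ xs
    have hy0 : 0 < x / xs := by positivity
    have hy1 : x / xs ≤ 1 := (div_le_one hxs0).2 hcase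
    have hH := logH1 hs1.le hy0 hy1
    rw [e1, e2, Real.log_div (ne_of_gt hxγ) hxs0.ne', e4] at hH
    have hH' : 0 ≤ (β * x + 1) * (x + γ) * (Real.log (x + γ) - Real.log xs - Real.log (β * x + 1))
        + (s ^ 2 - 1) * (x * (Real.log x - Real.log xs)) := by
      have h2 := mul_nonneg hxs0.le hH
      have heq : xs * ((β * x + 1) * ((x + γ) / xs) *
            (Real.log (x + γ) - Real.log xs - Real.log (β * x + 1))
          + (s ^ 2 - 1) * (x / xs * (Real.log x - Real.log xs)))
          = (β * x + 1) * (x + γ) * (Real.log (x + γ) - Real.log xs - Real.log (β * x + 1))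
          + (s ^ 2 - 1) * (x * (Real.log x - Real.log xs)) := by
        field_simp
      rw [heq] at h2
      exact h2
    have hlP : 0 ≤ Real.log xs * ((β * x + 1) * (x + γ) - (s + 1) ^ 2 * x) :=
      mul_nonneg hl0 (by linarith)
    linarith [hH', hlP, hloglam2]
  · -- xs ≤ x
    have hy : 1 ≤ x / xs := (one_le_div hxs0).2 hcase
    have hK := logK hs1.le hy
    rw [e1, e2, Real.log_div (ne_of_gt hxγ) hxs0.ne', e4] at hK
    have hxl : Real.log x ≤ Real.log lam := Real.log_le_log hx hxc
    have hE : (s - 1) * Real.log x ≤ 2 * s * Real.log xs := by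
      linarith [mul_nonneg (show (0:ℝ) ≤ s - 1 by linarith) (sub_nonneg.2 hxl), hloglam]
    have hyp1 : 0 ≤ (β * x + 1) * (x + γ) *
        ((s + 1) * (Real.log (x + γ) - Real.log (β * x + 1))
          - (2 * s * Real.log xs - (s - 1) * Real.log x)) :=
      mul_nonneg hPpos.le (by linarith)
    have hyp2 : 0 ≤ (2 * s * Real.log xs - (s - 1) * Real.log x) *
        ((β * x + 1) * (x + γ) - (s + 1) ^ 2 * x) :=
      mul_nonneg (by linarith) (by linarith)
    have hloglam3 : (s + 1) * ((s ^ 2 - 1) * x * Real.log lam)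
        = (s + 1) ^ 2 * x * (2 * s * Real.log xs) := by
      linear_combination (s + 1) ^ 2 * x * hloglam
    have main : (s + 1) * ((s ^ 2 - 1) * x * (Real.log lam - Real.log x))
        ≤ (s + 1) * ((β * x + 1) * (x + γ) * (Real.log (x + γ) - Real.log (β * x + 1))) := by
      linarith [hyp1, hyp2, hloglam3]
    exact le_of_mul_le_mul_left main (by linarith)
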